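/- For every k ≥ 1 the PMM iterates satisfy Σ_{j=1}^{k} ρ_j(2−ρ_j)γ_j² ‖(Mu_j+Cv_j−d, x_j−y_j)‖² ≤ d_0², where x_j−y_j = λ(w_{j-1}−Mu_j) and d_0 is the distance from (z_0,w_0) to the extended solution set S_e. -/

import Mathlib

open scoped RealInnerProductSpace

noncomputable section
set_option maxHeartbeats 1000000

/-- `w` is a subgradient of the extended-real-valued function `φ` at `x`. -/
def HasSubgrad {E : Type*} [NormedAddCommGroup E] [InnerProductSpace ℝ E]
    (φ : E → EReal) (w x : E) : Prop :=
  ∀ x' : E, φ x + ((⟪w, x' - x⟫ : ℝ) : EReal) ≤ φ x'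

/-- `w` is an `ε`-subgradient of `φ` at `x`. -/
def HasESubgrad {E : Type*} [NormedAddCommGroup E] [InnerProductSpace ℝ E]
    (φ : E → EReal) (ε : ℝ) (w x : E) : Prop :=
  ∀ x' : E, φ x + ((⟪w, x' - x⟫ : ℝ) : EReal) - (ε : EReal) ≤ φ x'

/-- Convexity for an extended-real-valued function. -/
def ConvexE {E : Type*} [NormedAddCommGroup E] [InnerProductSpace ℝ E]
    (φ : E → EReal) : Prop :=
  ∀ x y : E, ∀ a b : ℝ, 0 ≤ a → 0 ≤ b → a + b = 1 →
    φ (a • x + b • y) ≤ (a : EReal) * φ x + (b : EReal) * φ y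

/-- Proper closed convex function with values in `(-∞, ∞]`. -/
def IsPCC {E : Type*} [NormedAddCommGroup E] [InnerProductSpace ℝ E]
    (φ : E → EReal) : Prop :=
  (∀ x, φ x ≠ ⊥) ∧ (∃ x, φ x ≠ ⊤) ∧ LowerSemicontinuous φ ∧ ConvexE φ

/-- Fenchel conjugate. -/
def fconj {E : Type*} [NormedAddCommGroup E] [InnerProductSpace ℝ E]
    (φ : E → EReal) (w : E) : EReal :=
  ⨆ x : E, ((⟪w, x⟫ : ℝ) : EReal) - φ x

/-- Lagrangian of `min { f u + g v : M u + C v = d }`. -/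
def Lag {E₁ E₂ F : Type*} [NormedAddCommGroup E₁] [InnerProductSpace ℝ E₁]
    [NormedAddCommGroup E₂] [InnerProductSpace ℝ E₂]
    [NormedAddCommGroup F] [InnerProductSpace ℝ F]
    (f : E₁ → EReal) (g : E₂ → EReal) (M : E₁ →ₗ[ℝ] F) (C : E₂ →ₗ[ℝ] F) (d : F)
    (u : E₁) (v : E₂) (z : F) : EReal :=
  f u + g v + ((⟪M u + C v - d, z⟫ : ℝ) : EReal)

/-- Saddle point of the Lagrangian. -/
def IsSaddle {E₁ E₂ F : Type*} [NormedAddCommGroup E₁] [InnerProductSpace ℝ E₁]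
    [NormedAddCommGroup E₂] [InnerProductSpace ℝ E₂]
    [NormedAddCommGroup F] [InnerProductSpace ℝ F]
    (f : E₁ → EReal) (g : E₂ → EReal) (M : E₁ →ₗ[ℝ] F) (C : E₂ →ₗ[ℝ] F) (d : F)
    (us : E₁) (vs : E₂) (zs : F) : Prop :=
  Lag f g M C d us vs zs ≠ ⊤ ∧ Lag f g M C d us vs zs ≠ ⊥ ∧
  (∀ u v, Lag f g M C d us vs zs ≤ Lag f g M C d u v zs) ∧
  (∀ ζ, Lag f g M C d us vs ζ ≤ Lag f g M C d us vs zs)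

/-- `h₁(z) = f*(-M* z)`. -/
def hOne {E₁ F : Type*} [NormedAddCommGroup E₁] [InnerProductSpace ℝ E₁]
    [FiniteDimensional ℝ E₁] [NormedAddCommGroup F] [InnerProductSpace ℝ F]
    [FiniteDimensional ℝ F] (f : E₁ → EReal) (M : E₁ →ₗ[ℝ] F) (z : F) : EReal :=
  fconj f (-(LinearMap.adjoint M z))

/-- `h₂(z) = g*(-C* z) + ⟪d, z⟫`. -/
def hTwo {E₂ F : Type*} [NormedAddCommGroup E₂] [InnerProductSpace ℝ E₂]
    [FiniteDimensional ℝ E₂] [NormedAddCommGroup F] [InnerProductSpace ℝ F]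
    [FiniteDimensional ℝ F] (g : E₂ → EReal) (C : E₂ →ₗ[ℝ] F) (d : F) (z : F) : EReal :=
  fconj g (-(LinearMap.adjoint C z)) + ((⟪d, z⟫ : ℝ) : EReal)

/-- The extended solution set `S_e(∂h₁, ∂h₂)`. -/
def extSolSet {E₁ E₂ F : Type*} [NormedAddCommGroup E₁] [InnerProductSpace ℝ E₁]
    [FiniteDimensional ℝ E₁] [NormedAddCommGroup E₂] [InnerProductSpace ℝ E₂]
    [FiniteDimensional ℝ E₂] [NormedAddCommGroup F] [InnerProductSpace ℝ F]
    [FiniteDimensional ℝ F]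
    (f : E₁ → EReal) (g : E₂ → EReal) (M : E₁ →ₗ[ℝ] F) (C : E₂ →ₗ[ℝ] F) (d : F) :
    Set (F × F) :=
  {p | HasSubgrad (hOne f M) (-p.2) p.1 ∧ HasSubgrad (hTwo g C d) p.2 p.1}


section AuxPMM
set_option linter.unusedSectionVars false

variable {E F : Type*} [NormedAddCommGroup E] [InnerProductSpace ℝ E] [FiniteDimensional ℝ E]
  [NormedAddCommGroup F] [InnerProductSpace ℝ F] [FiniteDimensional ℝ F]

lemma firstOrderPMM (g : E → EReal) (hgB : ∀ x, g x ≠ ⊥) (hgT : ∃ x, g x ≠ ⊤)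
    (hgc : ConvexE g) (C : E →ₗ[ℝ] F) (d p : F) (lam : ℝ) (hlam : 0 < lam) (v0 : E)
    (hmin : ∀ v' : E, g v0 + ((⟪p, C v0 - d⟫ + lam / 2 * ‖C v0 - d‖ ^ 2 : ℝ) : EReal) ≤
      g v' + ((⟪p, C v' - d⟫ + lam / 2 * ‖C v' - d‖ ^ 2 : ℝ) : EReal)) :
    ∃ G0 : ℝ, g v0 = (G0 : EReal) ∧
      ∀ v' : E, g v0 + ((⟪p + lam • (C v0 - d), C v0 - C v'⟫ : ℝ) : EReal) ≤ g v' := by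
  obtain ⟨vt, hvt⟩ := hgT
  obtain ⟨Gt, hGt⟩ : ∃ r : ℝ, g vt = (r : EReal) :=
    ⟨(g vt).toReal, (EReal.coe_toReal hvt (hgB vt)).symm⟩
  have hv0T : g v0 ≠ ⊤ := by
    intro hT
    have h := hmin vt
    rw [hT, hGt, EReal.top_add_coe, ← EReal.coe_add, top_le_iff] at h
    exact (EReal.coe_ne_top _) h
  obtain ⟨G0, hG0⟩ : ∃ r : ℝ, g v0 = (r : EReal) :=
    ⟨(g v0).toReal, (EReal.coe_toReal hv0T (hgB v0)).symm⟩
  refine ⟨G0, hG0, ?_⟩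
  intro v'
  by_cases hv'T : g v' = ⊤
  · rw [hv'T]; exact le_top
  obtain ⟨G', hG'⟩ : ∃ r : ℝ, g v' = (r : EReal) :=
    ⟨(g v').toReal, (EReal.coe_toReal hv'T (hgB v')).symm⟩
  rw [hG0, hG', ← EReal.coe_add, EReal.coe_le_coe_iff]
  set a : F := C v0 - d with ha
  set hh : F := C v' - C v0 with hhh
  have hI : ⟪p + lam • a, C v0 - C v'⟫ = -(⟪p, hh⟫ + lam * ⟪a, hh⟫) := by
    have : C v0 - C v' = -hh := by simp [hhh]
    rw [this, inner_neg_right, inner_add_left, real_inner_smul_left]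
  rw [hI]
  have key : ∀ t : ℝ, 0 < t → t ≤ 1 →
      G0 + -(⟪p, hh⟫ + lam * ⟪a, hh⟫) ≤ G' + lam / 2 * t * ‖hh‖ ^ 2 := by
    intro t ht0 ht1
    have hconv := hgc v0 v' (1 - t) t (by linarith) (le_of_lt ht0) (by ring)
    rw [hG0, hG'] at hconv
    have hconv' : g ((1 - t) • v0 + t • v') ≤ (((1 - t) * G0 + t * G' : ℝ) : EReal) := by
      rw [EReal.coe_add, EReal.coe_mul, EReal.coe_mul] at *
      exact hconv
    have hm := (hmin ((1 - t) • v0 + t • v')).trans (add_le_add_left hconv' _)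
    rw [hG0, ← EReal.coe_add, ← EReal.coe_add, EReal.coe_le_coe_iff] at hm
    have hCt : C ((1 - t) • v0 + t • v') - d = a + t • hh := by
      rw [map_add, map_smul, map_smul, ha, hhh]; module
    rw [hCt] at hm
    have e1 : ⟪p, a + t • hh⟫ = ⟪p, a⟫ + t * ⟪p, hh⟫ := by
      rw [inner_add_right, real_inner_smul_right]
    have e2 : ‖a + t • hh‖ ^ 2 = ‖a‖ ^ 2 + 2 * (t * ⟪a, hh⟫) + t ^ 2 * ‖hh‖ ^ 2 := by
      rw [← real_inner_self_eq_norm_sq, ← real_inner_self_eq_norm_sq,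
        ← real_inner_self_eq_norm_sq, inner_add_add_self, real_inner_smul_left,
        real_inner_smul_right, real_inner_smul_left, real_inner_smul_right,
        real_inner_comm hh a]
      ring
    rw [e1, e2] at hm
    have h2 : t * (G0 + -(⟪p, hh⟫ + lam * ⟪a, hh⟫)) ≤
        t * (G' + lam / 2 * t * ‖hh‖ ^ 2) := by nlinarith [hm]
    exact le_of_mul_le_mul_left h2 ht0
  apply le_of_forall_pos_le_add
  intro ε hε
  set c : ℝ := lam / 2 * ‖hh‖ ^ 2 with hc
  have hc0 : 0 ≤ c := by positivity
  set t : ℝ := min 1 (ε / (c + 1)) with htd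
  have ht0 : 0 < t := lt_min one_pos (by positivity)
  have ht1 : t ≤ 1 := min_le_left _ _
  have h3 := key t ht0 ht1
  have h4 : c * t ≤ ε := by
    have h5 : t ≤ ε / (c + 1) := min_le_right _ _
    have h6 : c * t ≤ c * (ε / (c + 1)) := by nlinarith
    calc c * t ≤ c * (ε / (c + 1)) := h6
      _ ≤ ε := by rw [mul_div_assoc']; rw [div_le_iff₀ (by linarith)]; nlinarith
  calc G0 + -(⟪p, hh⟫ + lam * ⟪a, hh⟫) ≤ G' + lam / 2 * t * ‖hh‖ ^ 2 := h3
    _ = G' + c * t := by rw [hc]; ring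
    _ ≤ G' + ε := by linarith

lemma fconj_gePMM (g : E → EReal) (w : E) (x : E) (r : ℝ) (hr : g x = (r : EReal)) :
    ((⟪w, x⟫ - r : ℝ) : EReal) ≤ fconj g w := by
  have h := le_iSup (fun x => ((⟪w, x⟫ : ℝ) : EReal) - g x) x
  rw [hr, ← EReal.coe_sub] at h
  exact h

lemma hTwo_ne_botPMM (g : E → EReal) (C : E →ₗ[ℝ] F) (d : F) (v0 : E) (G0 : ℝ)
    (hG0 : g v0 = (G0 : EReal)) (z : F) : hTwo g C d z ≠ ⊥ := by
  intro hbot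
  rcases EReal.add_eq_bot_iff.mp hbot with h | h
  · have h2 := fconj_gePMM g (-(LinearMap.adjoint C z)) v0 G0 hG0
    rw [h] at h2
    exact (EReal.bot_lt_coe _).not_ge h2
  · exact (EReal.coe_ne_bot _) h

lemma conjSubgradPMM (g : E → EReal) (C : E →ₗ[ℝ] F) (d : F) (v0 : E) (G0 : ℝ)
    (hG0 : g v0 = (G0 : EReal)) (x : F)
    (hsub : ∀ v' : E, g v0 + ((⟪x, C v0 - C v'⟫ : ℝ) : EReal) ≤ g v') :
    hTwo g C d x = ((-⟪x, C v0⟫ - G0 + ⟪d, x⟫ : ℝ) : EReal) ∧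
      HasSubgrad (hTwo g C d) (d - C v0) x := by
  have hval : fconj g (-(LinearMap.adjoint C x)) = ((-⟪x, C v0⟫ - G0 : ℝ) : EReal) := by
    apply le_antisymm
    · apply iSup_le
      intro v
      have hgv : ((G0 + ⟪x, C v0 - C v⟫ : ℝ) : EReal) ≤ g v := by
        have h := hsub v
        rwa [hG0, ← EReal.coe_add] at h
      by_cases hT : g v = ⊤
      · rw [hT]
        simp
      obtain ⟨Gv, hGv⟩ : ∃ r : ℝ, g v = (r : EReal) := by
        refine ⟨(g v).toReal, (EReal.coe_toReal hT ?_).symm⟩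
        intro hb; rw [hb] at hgv; exact (EReal.coe_ne_bot _) (le_bot_iff.mp hgv)
      rw [hGv, ← EReal.coe_sub, EReal.coe_le_coe_iff]
      rw [hGv, EReal.coe_le_coe_iff] at hgv
      have hadj : ⟪-(LinearMap.adjoint C x), v⟫ = -⟪x, C v⟫ := by
        rw [inner_neg_left, LinearMap.adjoint_inner_left]
      rw [hadj]
      rw [inner_sub_right] at hgv
      linarith
    · have hadj : ⟪-(LinearMap.adjoint C x), v0⟫ = -⟪x, C v0⟫ := by
        rw [inner_neg_left, LinearMap.adjoint_inner_left]
      have h := fconj_gePMM g (-(LinearMap.adjoint C x)) v0 G0 hG0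
      rwa [hadj] at h
  constructor
  · rw [hTwo, hval, ← EReal.coe_add]
  · intro z'
    rw [hTwo, hval, ← EReal.coe_add, ← EReal.coe_add]
    have hge : ((⟪-(LinearMap.adjoint C z'), v0⟫ - G0 + ⟪d, z'⟫ : ℝ) : EReal) ≤
        hTwo g C d z' := by
      rw [EReal.coe_add]
      exact add_le_add_left (fconj_gePMM g _ v0 G0 hG0) _
    refine le_trans (le_of_eq ?_) hge
    rw [EReal.coe_eq_coe_iff]
    have hadj : ⟪-(LinearMap.adjoint C z'), v0⟫ = -⟪z', C v0⟫ := by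
      rw [inner_neg_left, LinearMap.adjoint_inner_left]
    rw [hadj]
    simp [inner_sub_left, inner_sub_right, real_inner_comm]
    ring

lemma subgrad_monoPMM {F : Type*} [NormedAddCommGroup F] [InnerProductSpace ℝ F]
    (φ : F → EReal) (hb : ∀ z, φ z ≠ ⊥) (x1 x2 w1 w2 : F) (r1 : ℝ)
    (hr1 : φ x1 = (r1 : EReal)) (h1 : HasSubgrad φ w1 x1) (h2 : HasSubgrad φ w2 x2) :
    0 ≤ ⟪w1 - w2, x1 - x2⟫ := by
  have h21 := h2 x1
  have hT : φ x2 ≠ ⊤ := by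
    intro hT
    rw [hT, hr1] at h21
    simp [EReal.top_add_coe] at h21
  obtain ⟨r2, hr2⟩ : ∃ r : ℝ, φ x2 = (r : EReal) :=
    ⟨(φ x2).toReal, (EReal.coe_toReal hT (hb x2)).symm⟩
  rw [hr2, hr1, ← EReal.coe_add, EReal.coe_le_coe_iff] at h21
  have h12 := h1 x2
  rw [hr1, hr2, ← EReal.coe_add, EReal.coe_le_coe_iff] at h12
  have e1 : ⟪w1 - w2, x1 - x2⟫ = -⟪w1, x2 - x1⟫ - ⟪w2, x1 - x2⟫ := by
    simp [inner_sub_left, inner_sub_right]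
    ring
  rw [e1]
  linarith

lemma hOne_eq_hTwoPMM (f : E → EReal) (M : E →ₗ[ℝ] F) : hOne f M = hTwo f M 0 := by
  funext z
  simp [hOne, hTwo]

end AuxPMM

/-- summed Fejér inequality: the weighted sum of squared residuals is
bounded by the squared distance from the initial point to the extended solution set. -/
theorem pmm_residual_sum_bound
    (m1 m2 n : ℕ)
    (f : EuclideanSpace ℝ (Fin m1) → EReal) (g : EuclideanSpace ℝ (Fin m2) → EReal)
    (hf : IsPCC f) (hg : IsPCC g)
    (M : EuclideanSpace ℝ (Fin m1) →ₗ[ℝ] EuclideanSpace ℝ (Fin n))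
    (C : EuclideanSpace ℝ (Fin m2) →ₗ[ℝ] EuclideanSpace ℝ (Fin n))
    (d : EuclideanSpace ℝ (Fin n))
    (lam : ℝ) (hlam : 0 < lam) (ρb : ℝ) (hρb : ρb ∈ Set.Ico (0 : ℝ) 1)
    (u : ℕ → EuclideanSpace ℝ (Fin m1)) (v : ℕ → EuclideanSpace ℝ (Fin m2))
    (z w x y : ℕ → EuclideanSpace ℝ (Fin n)) (γ ρ : ℕ → ℝ)
    (hv : ∀ k, 1 ≤ k → ∀ v' : EuclideanSpace ℝ (Fin m2),
      g (v k) + ((⟪z (k-1) + lam • w (k-1), C (v k) - d⟫ +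
          lam / 2 * ‖C (v k) - d‖ ^ 2 : ℝ) : EReal) ≤
        g v' + ((⟪z (k-1) + lam • w (k-1), C v' - d⟫ +
          lam / 2 * ‖C v' - d‖ ^ 2 : ℝ) : EReal))
    (hu : ∀ k, 1 ≤ k → ∀ u' : EuclideanSpace ℝ (Fin m1),
      f (u k) + ((⟪z (k-1) + lam • (C (v k) - d), M (u k)⟫ +
          lam / 2 * ‖M (u k)‖ ^ 2 : ℝ) : EReal) ≤
        f u' + ((⟪z (k-1) + lam • (C (v k) - d), M u'⟫ +
          lam / 2 * ‖M u'‖ ^ 2 : ℝ) : EReal))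
    (hx : ∀ k, 1 ≤ k → x k = z (k-1) + lam • w (k-1) + lam • (C (v k) - d))
    (hy : ∀ k, 1 ≤ k → y k = x k - lam • (w (k-1) - M (u k)))
    (hnz : ∀ k, 1 ≤ k → ‖M (u k) + C (v k) - d‖ + ‖M (u k) - w (k-1)‖ ≠ 0)
    (hγ : ∀ k, 1 ≤ k → γ k = (lam * ‖C (v k) - d + w (k-1)‖ ^ 2 +
        lam * ⟪d - C (v k) - M (u k), w (k-1) - M (u k)⟫) /
      (‖M (u k) + C (v k) - d‖ ^ 2 + lam ^ 2 * ‖M (u k) - w (k-1)‖ ^ 2))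
    (hρ : ∀ k, 1 ≤ k → ρ k ∈ Set.Icc (1 - ρb) (1 + ρb))
    (hz : ∀ k, 1 ≤ k → z k = z (k-1) + (ρ k * γ k) • (M (u k) + C (v k) - d))
    (hw : ∀ k, 1 ≤ k → w k = w (k-1) - (ρ k * γ k * lam) • (w (k-1) - M (u k)))
    (hsaddle : ∃ us vs zs, IsSaddle f g M C d us vs zs)
    (d0 : ℝ)
    (hd0 : d0 = sInf ((fun p : EuclideanSpace ℝ (Fin n) × EuclideanSpace ℝ (Fin n) =>
      Real.sqrt (‖z 0 - p.1‖ ^ 2 + ‖w 0 - p.2‖ ^ 2)) '' extSolSet f g M C d))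
    (k : ℕ) (hk : 1 ≤ k) :
    ∑ j ∈ Finset.Icc 1 k, ρ j * (2 - ρ j) * γ j ^ 2 *
        (‖M (u j) + C (v j) - d‖ ^ 2 + ‖x j - y j‖ ^ 2) ≤ d0 ^ 2 := by
  classical
  obtain ⟨hfB, hfT, _, hfc⟩ := hf
  obtain ⟨hgB, hgT, _, hgc⟩ := hg
  -- Part 1: the bound holds w.r.t. any point of the extended solution set
  have main : ∀ p ∈ extSolSet f g M C d,
      ∑ j ∈ Finset.Icc 1 k, ρ j * (2 - ρ j) * γ j ^ 2 *
        (‖M (u j) + C (v j) - d‖ ^ 2 + ‖x j - y j‖ ^ 2) ≤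
      ‖z 0 - p.1‖ ^ 2 + ‖w 0 - p.2‖ ^ 2 := by
    rintro ⟨zst, wst⟩ ⟨hp1, hp2⟩
    dsimp only at hp1 hp2 ⊢
    rw [hOne_eq_hTwoPMM] at hp1
    have step : ∀ j : ℕ, 1 ≤ j →
        ‖z j - zst‖ ^ 2 + ‖w j - wst‖ ^ 2 + ρ j * (2 - ρ j) * γ j ^ 2 *
          (‖M (u j) + C (v j) - d‖ ^ 2 + ‖x j - y j‖ ^ 2) ≤
        ‖z (j - 1) - zst‖ ^ 2 + ‖w (j - 1) - wst‖ ^ 2 := by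
      intro j hj
      -- subgradient of hTwo g C d at x j
      obtain ⟨Gj, hGj, hsubg⟩ := firstOrderPMM g hgB hgT hgc C d
        (z (j - 1) + lam • w (j - 1)) lam hlam (v j) (hv j hj)
      rw [← hx j hj] at hsubg
      obtain ⟨hval2, hsg2⟩ := conjSubgradPMM g C d (v j) Gj hGj (x j) hsubg
      -- subgradient of hTwo f M 0 at y j
      have hu' : ∀ u' : EuclideanSpace ℝ (Fin m1),
          f (u j) + ((⟪z (j - 1) + lam • (C (v j) - d), M (u j) - 0⟫ +
            lam / 2 * ‖M (u j) - 0‖ ^ 2 : ℝ) : EReal) ≤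
          f u' + ((⟪z (j - 1) + lam • (C (v j) - d), M u' - 0⟫ +
            lam / 2 * ‖M u' - 0‖ ^ 2 : ℝ) : EReal) := by
        simpa only [sub_zero] using hu j hj
      obtain ⟨Fj, hFj, hsubf⟩ := firstOrderPMM f hfB hfT hfc M 0
        (z (j - 1) + lam • (C (v j) - d)) lam hlam (u j) hu'
      have hyj : y j = z (j - 1) + lam • (C (v j) - d) + lam • (M (u j) - 0) := by
        rw [hy j hj, hx j hj]; module
      rw [← hyj] at hsubf
      obtain ⟨hval1, hsg1⟩ := conjSubgradPMM f M 0 (u j) Fj hFj (y j) hsubf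
      -- monotonicity inequalities
      have A1 : (0 : ℝ) ≤ ⟪(d - C (v j)) - wst, x j - zst⟫ :=
        subgrad_monoPMM (hTwo g C d) (hTwo_ne_botPMM g C d (v j) Gj hGj) (x j) zst
          (d - C (v j)) wst _ hval2 hsg2 hp2
      have A2 : (0 : ℝ) ≤ ⟪(0 - M (u j)) - (-wst), y j - zst⟫ :=
        subgrad_monoPMM (hTwo f M 0) (hTwo_ne_botPMM f M 0 (u j) Fj hFj) (y j) zst
          (0 - M (u j)) (-wst) _ hval1 hsg1 hp1
      -- real algebra
      have hγj := hγ j hj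
      have hnz' := hnz j hj
      rw [norm_sub_rev (M (u j)) (w (j - 1))] at hγj hnz'
      set e := M (u j) + C (v j) - d with he
      set b := w (j - 1) - M (u j) with hb
      have hNpos : 0 < ‖e‖ ^ 2 + lam ^ 2 * ‖b‖ ^ 2 := by
        have h0 : 0 < ‖e‖ ∨ 0 < ‖b‖ := by
          by_contra hcon
          push_neg at hcon
          have h1 : ‖e‖ = 0 := le_antisymm hcon.1 (norm_nonneg _)
          have h2 : ‖b‖ = 0 := le_antisymm hcon.2 (norm_nonneg _)
          rw [h1, h2] at hnz'
          exact hnz' (by ring)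
        have hl2 : 0 < lam ^ 2 := by positivity
        rcases h0 with h0 | h0
        · nlinarith [pow_pos h0 2, mul_nonneg hl2.le (sq_nonneg ‖b‖)]
        · nlinarith [sq_nonneg ‖e‖, mul_pos hl2 (pow_pos h0 2)]
      have hγN : γ j * (‖e‖ ^ 2 + lam ^ 2 * ‖b‖ ^ 2) =
          lam * ‖C (v j) - d + w (j - 1)‖ ^ 2 + lam * ⟪d - C (v j) - M (u j), b⟫ := by
        rw [hγj, div_mul_cancel₀ _ hNpos.ne']
      have hnum : 0 ≤ lam * ‖C (v j) - d + w (j - 1)‖ ^ 2 +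
          lam * ⟪d - C (v j) - M (u j), b⟫ := by
        have hba : d - C (v j) - M (u j) = b - (C (v j) - d + w (j - 1)) := by
          rw [hb]; module
        rw [hba, inner_sub_left, real_inner_self_eq_norm_sq]
        nlinarith [real_inner_le_norm (C (v j) - d + w (j - 1)) b, hlam.le,
          sq_nonneg (‖C (v j) - d + w (j - 1)‖ - ‖b‖), norm_nonneg b,
          norm_nonneg (C (v j) - d + w (j - 1)),
          real_inner_comm b (C (v j) - d + w (j - 1))]
      have hγ0 : 0 ≤ γ j := by
        rw [hγj]
        exact div_nonneg hnum hNpos.le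
      -- separation inequality
      have hid : ⟪z (j - 1) - zst, e⟫ - lam * ⟪w (j - 1) - wst, b⟫ +
          (lam * ‖C (v j) - d + w (j - 1)‖ ^ 2 + lam * ⟪d - C (v j) - M (u j), b⟫) =
          -(⟪(d - C (v j)) - wst, x j - zst⟫ + ⟪(0 - M (u j)) - (-wst), y j - zst⟫) := by
        rw [hx j hj, hyj, he, hb, ← real_inner_self_eq_norm_sq]
        simp only [inner_sub_left, inner_sub_right, inner_add_left, inner_add_right,
          real_inner_smul_left, real_inner_smul_right, inner_neg_left, inner_neg_right,
          zero_sub, sub_zero, neg_neg, neg_sub]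
        ring_nf
        simp only [real_inner_comm (C (v j)) (w (j - 1)), real_inner_comm d (w (j - 1)),
          real_inner_comm (M (u j)) (C (v j)), real_inner_comm (M (u j)) d,
          real_inner_comm d (z (j - 1)), real_inner_comm (C (v j)) (z (j - 1)),
          real_inner_comm d zst, real_inner_comm (C (v j)) zst,
          real_inner_comm (M (u j)) (z (j - 1)), real_inner_comm (M (u j)) zst,
          real_inner_comm d (C (v j)), real_inner_comm (M (u j)) (w (j - 1))]
        ring
      have hsep : ⟪z (j - 1) - zst, e⟫ - lam * ⟪w (j - 1) - wst, b⟫ +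
          (lam * ‖C (v j) - d + w (j - 1)‖ ^ 2 +
            lam * ⟪d - C (v j) - M (u j), b⟫) ≤ 0 := by
        rw [hid]; linarith
      -- norm expansions
      have hzj : z j - zst = (z (j - 1) - zst) + (ρ j * γ j) • e := by
        rw [hz j hj, he]; module
      have hwj : w j - wst = (w (j - 1) - wst) - (ρ j * γ j * lam) • b := by
        rw [hw j hj, hb]; module
      have nz : ‖z j - zst‖ ^ 2 = ‖z (j - 1) - zst‖ ^ 2 +
          2 * (ρ j * γ j) * ⟪z (j - 1) - zst, e⟫ + (ρ j * γ j) ^ 2 * ‖e‖ ^ 2 := by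
        rw [hzj, norm_add_sq_real, real_inner_smul_right, norm_smul,
          Real.norm_eq_abs, mul_pow, sq_abs]
        ring
      have nw : ‖w j - wst‖ ^ 2 = ‖w (j - 1) - wst‖ ^ 2 -
          2 * (ρ j * γ j * lam) * ⟪w (j - 1) - wst, b⟫ +
          (ρ j * γ j * lam) ^ 2 * ‖b‖ ^ 2 := by
        rw [hwj, norm_sub_sq_real, real_inner_smul_right, norm_smul,
          Real.norm_eq_abs, mul_pow, sq_abs]
        ring
      have nxy : ‖x j - y j‖ ^ 2 = lam ^ 2 * ‖b‖ ^ 2 := by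
        have hxyb : x j - y j = lam • b := by rw [hy j hj, hb]; module
        rw [hxyb, norm_smul, Real.norm_eq_abs, mul_pow, sq_abs]
      have hρj := hρ j hj
      have hρ0 : 0 ≤ ρ j := by
        have := hρj.1; have := hρb.1; have := hρb.2
        simp only [Set.mem_Icc] at *
        linarith [hρj.1]
      have hρ2 : ρ j ≤ 2 := by
        have := hρj.2; have := hρb.2
        simp only [Set.mem_Icc] at *
        linarith [hρj.2]
      have hfin : ρ j * γ j * ((⟪z (j - 1) - zst, e⟫ - lam * ⟪w (j - 1) - wst, b⟫) +
          γ j * (‖e‖ ^ 2 + lam ^ 2 * ‖b‖ ^ 2)) ≤ 0 := by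
        have h1 : (⟪z (j - 1) - zst, e⟫ - lam * ⟪w (j - 1) - wst, b⟫) +
            γ j * (‖e‖ ^ 2 + lam ^ 2 * ‖b‖ ^ 2) ≤ 0 := by
          rw [hγN]; linarith
        exact mul_nonpos_of_nonneg_of_nonpos (mul_nonneg hρ0 hγ0) h1
      rw [nz, nw, nxy]
      nlinarith [hfin]
    -- telescoping
    have tele : ∀ K : ℕ, 1 ≤ K →
        (∑ j ∈ Finset.Icc 1 K, ρ j * (2 - ρ j) * γ j ^ 2 *
          (‖M (u j) + C (v j) - d‖ ^ 2 + ‖x j - y j‖ ^ 2)) +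
        (‖z K - zst‖ ^ 2 + ‖w K - wst‖ ^ 2) ≤
        ‖z 0 - zst‖ ^ 2 + ‖w 0 - wst‖ ^ 2 := by
      intro K hK
      induction K, hK using Nat.le_induction with
      | base =>
        have h1 := step 1 le_rfl
        simp only [Nat.sub_self] at h1
        rw [Finset.Icc_self, Finset.sum_singleton]
        linarith
      | succ nn hn ih =>
        rw [Finset.sum_Icc_succ_top (by omega : 1 ≤ nn + 1)]
        have hs := step (nn + 1) (by omega)
        simp only [Nat.add_sub_cancel] at hs
        linarith
    have := tele k hk
    nlinarith [sq_nonneg ‖z k - zst‖, sq_nonneg ‖w k - wst‖]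
  -- Part 2: the extended solution set is nonempty
  obtain ⟨us, vs, zs, hLT, hLB, hminL, hmaxL⟩ := hsaddle
  have hfusT : f us ≠ ⊤ := by
    intro h
    apply hLT
    rw [Lag, h, EReal.top_add_of_ne_bot (hgB vs), EReal.top_add_coe]
  have hgvsT : g vs ≠ ⊤ := by
    intro h
    apply hLT
    rw [Lag, h, EReal.add_top_of_ne_bot (hfB us), EReal.top_add_coe]
  obtain ⟨Fs, hFs⟩ : ∃ r : ℝ, f us = (r : EReal) :=
    ⟨(f us).toReal, (EReal.coe_toReal hfusT (hfB us)).symm⟩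
  obtain ⟨Gs, hGs⟩ : ∃ r : ℝ, g vs = (r : EReal) :=
    ⟨(g vs).toReal, (EReal.coe_toReal hgvsT (hgB vs)).symm⟩
  have he0 : M us + C vs - d = 0 := by
    have h := hmaxL (zs + (M us + C vs - d))
    rw [Lag, Lag, hFs, hGs] at h
    have h' : Fs + Gs + ⟪M us + C vs - d, zs + (M us + C vs - d)⟫ ≤
        Fs + Gs + ⟪M us + C vs - d, zs⟫ := by exact_mod_cast h
    have h2 : ⟪M us + C vs - d, zs + (M us + C vs - d)⟫ ≤ ⟪M us + C vs - d, zs⟫ := by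
      linarith
    rw [inner_add_right, real_inner_self_eq_norm_sq] at h2
    have h3 : ‖M us + C vs - d‖ ≤ 0 := by nlinarith [norm_nonneg (M us + C vs - d)]
    exact norm_le_zero_iff.mp h3
  have h3M : ∀ w' : EuclideanSpace ℝ (Fin m1), M w' + C vs - d = M w' - M us := by
    intro w'
    rw [show M w' + C vs - d = (M w' - M us) + (M us + C vs - d) by module, he0, add_zero]
  have h3C : ∀ w' : EuclideanSpace ℝ (Fin m2), M us + C w' - d = C w' - C vs := by
    intro w'
    rw [show M us + C w' - d = (C w' - C vs) + (M us + C vs - d) by module, he0, add_zero]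
  have hsubf : ∀ u' : EuclideanSpace ℝ (Fin m1),
      f us + ((⟪zs, M us - M u'⟫ : ℝ) : EReal) ≤ f u' := by
    intro u'
    by_cases hT : f u' = ⊤
    · rw [hT]; exact le_top
    obtain ⟨Fu, hFu⟩ : ∃ r : ℝ, f u' = (r : EReal) :=
      ⟨(f u').toReal, (EReal.coe_toReal hT (hfB u')).symm⟩
    have h := hminL u' vs
    rw [Lag, Lag, hFs, hGs, hFu, he0, h3M u'] at h
    have h'' : Fs + Gs + ⟪(0 : EuclideanSpace ℝ (Fin n)), zs⟫ ≤
        Fu + Gs + ⟪M u' - M us, zs⟫ := by exact_mod_cast h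
    clear h
    have h := h''
    rw [hFs, hFu, ← EReal.coe_add, EReal.coe_le_coe_iff]
    have hcomm : ⟪zs, M us - M u'⟫ = -⟪M u' - M us, zs⟫ := by
      rw [inner_sub_right, inner_sub_left, real_inner_comm zs (M us),
        real_inner_comm zs (M u')]
      ring
    rw [hcomm]
    simp only [inner_zero_left] at h
    linarith
  have hsubg : ∀ v' : EuclideanSpace ℝ (Fin m2),
      g vs + ((⟪zs, C vs - C v'⟫ : ℝ) : EReal) ≤ g v' := by
    intro v'
    by_cases hT : g v' = ⊤
    · rw [hT]; exact le_top
    obtain ⟨Gv, hGv⟩ : ∃ r : ℝ, g v' = (r : EReal) :=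
      ⟨(g v').toReal, (EReal.coe_toReal hT (hgB v')).symm⟩
    have h := hminL us v'
    rw [Lag, Lag, hFs, hGs, hGv, he0, h3C v'] at h
    have h'' : Fs + Gs + ⟪(0 : EuclideanSpace ℝ (Fin n)), zs⟫ ≤
        Fs + Gv + ⟪C v' - C vs, zs⟫ := by exact_mod_cast h
    clear h
    have h := h''
    rw [hGs, hGv, ← EReal.coe_add, EReal.coe_le_coe_iff]
    have hcomm : ⟪zs, C vs - C v'⟫ = -⟪C v' - C vs, zs⟫ := by
      rw [inner_sub_right, inner_sub_left, real_inner_comm zs (C vs),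
        real_inner_comm zs (C v')]
      ring
    rw [hcomm]
    simp only [inner_zero_left] at h
    linarith
  obtain ⟨_, hsgf⟩ := conjSubgradPMM f M 0 us Fs hFs zs hsubf
  obtain ⟨_, hsgg⟩ := conjSubgradPMM g C d vs Gs hGs zs hsubg
  have hMus : (0 : EuclideanSpace ℝ (Fin n)) - M us = -(d - C vs) := by
    have hM : M us - (d - C vs) = 0 := by
      rw [show M us - (d - C vs) = M us + C vs - d by module]; exact he0
    rw [sub_eq_zero.mp hM]; module
  have hmem : ((zs, d - C vs) : EuclideanSpace ℝ (Fin n) × EuclideanSpace ℝ (Fin n)) ∈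
      extSolSet f g M C d := by
    constructor
    · rw [hOne_eq_hTwoPMM]
      dsimp only
      rw [← hMus]
      exact hsgf
    · exact hsgg
  -- Part 3: conclude via the infimum
  have hS0 : 0 ≤ ∑ j ∈ Finset.Icc 1 k, ρ j * (2 - ρ j) * γ j ^ 2 *
      (‖M (u j) + C (v j) - d‖ ^ 2 + ‖x j - y j‖ ^ 2) := by
    apply Finset.sum_nonneg
    intro j hjmem
    have hj1 : 1 ≤ j := (Finset.mem_Icc.mp hjmem).1
    have hρj := hρ j hj1
    simp only [Set.mem_Icc] at hρj
    have hr1 : 0 ≤ ρ j * (2 - ρ j) := by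
      have := hρb.1; have := hρb.2
      apply mul_nonneg <;> linarith [hρj.1, hρj.2]
    apply mul_nonneg (mul_nonneg hr1 (sq_nonneg _))
    positivity
  set Ssum := ∑ j ∈ Finset.Icc 1 k, ρ j * (2 - ρ j) * γ j ^ 2 *
      (‖M (u j) + C (v j) - d‖ ^ 2 + ‖x j - y j‖ ^ 2) with hSsum
  have hub : ∀ bb ∈ (fun p : EuclideanSpace ℝ (Fin n) × EuclideanSpace ℝ (Fin n) =>
      Real.sqrt (‖z 0 - p.1‖ ^ 2 + ‖w 0 - p.2‖ ^ 2)) '' extSolSet f g M C d,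
      Real.sqrt Ssum ≤ bb := by
    rintro bb ⟨p, hp, rfl⟩
    exact Real.sqrt_le_sqrt (main p hp)
  have hsq : Real.sqrt Ssum ≤ d0 := by
    rw [hd0]
    exact le_csInf ⟨_, Set.mem_image_of_mem _ hmem⟩ hub
  calc Ssum = Real.sqrt Ssum ^ 2 := (Real.sq_sqrt hS0).symm
    _ ≤ d0 ^ 2 := by nlinarith [Real.sqrt_nonneg Ssum]
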